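/- For any natural number k, real numbers d_1, ..., d_k, and nonnegative real number d, there exists a unique real number t such that t + d_i ≥ 0 for all i and the product ∏_{i=1}^k (t + d_i) equals d. -/
import Mathlib


/-- For any natural number `k ≥ 1`, real numbers `d 1, …, d k`, and nonnegative real
number `d`, there exists a unique real number `t` such that `t + d i ≥ 0` for all `i`
and `∏ i, (t + d i) = d`. -/
theorem unique_shift_with_nonneg_factors_and_given_product
    (k : ℕ) (hk : 1 ≤ k) (d : Fin k → ℝ) (dd : ℝ) (hdd : 0 ≤ dd) :
    ∃! t : ℝ, (∀ i : Fin k, 0 ≤ t + d i) ∧ ∏ i : Fin k, (t + d i) = dd := by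
  haveI : Nonempty (Fin k) := ⟨⟨0, hk⟩⟩
  set f : ℝ → ℝ := fun t => ∏ i : Fin k, (t + d i) with hf
  set t₀ : ℝ := Finset.univ.sup' Finset.univ_nonempty (fun i => -d i) with ht₀
  have hcond : ∀ t : ℝ, (∀ i : Fin k, 0 ≤ t + d i) ↔ t₀ ≤ t := by
    intro t
    rw [ht₀, Finset.sup'_le_iff]
    constructor
    · intro h i _; have := h i; linarith
    · intro h i; have := h i (Finset.mem_univ i); linarith
  have ht₀mem : ∀ i : Fin k, -d i ≤ t₀ := fun i =>
    Finset.le_sup' (fun i => -d i) (Finset.mem_univ i)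
  have hf0 : f t₀ = 0 := by
    obtain ⟨i, _, hi⟩ := Finset.exists_mem_eq_sup' Finset.univ_nonempty (fun i => -d i)
    refine Finset.prod_eq_zero (Finset.mem_univ i) ?_
    rw [ht₀, hi]; ring
  have hpos : ∀ t : ℝ, t₀ < t → 0 < f t := by
    intro t ht
    refine Finset.prod_pos fun i _ => ?_
    have := ht₀mem i; linarith
  have hmono : StrictMonoOn f (Set.Ici t₀) := by
    intro a ha b hb hab
    rcases eq_or_lt_of_le (Set.mem_Ici.mp ha) with h | h
    · rw [← h, hf0]; exact hpos b (h ▸ hab)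
    · refine Finset.prod_lt_prod_of_nonempty (fun i _ => ?_) (fun i _ => ?_)
        Finset.univ_nonempty
      · have := ht₀mem i; linarith
      · linarith
  have hfcont : Continuous f := by
    apply continuous_finset_prod
    intro i _
    exact continuous_id.add continuous_const
  set b : ℝ := t₀ + max dd 1 with hb
  have ht₀b : t₀ ≤ b := by have : (1:ℝ) ≤ max dd 1 := le_max_right _ _; rw [hb]; linarith
  have hfb : dd ≤ f b := by
    have h1 : (max dd 1 : ℝ) ^ k ≤ f b := by
      rw [hf]
      calc (max dd 1 : ℝ) ^ k = ∏ _i : Fin k, (max dd 1 : ℝ) := by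
            rw [Finset.prod_const, Finset.card_univ, Fintype.card_fin]
        _ ≤ ∏ i : Fin k, (b + d i) := by
            refine Finset.prod_le_prod (fun i _ => ?_) (fun i _ => ?_)
            · exact le_trans zero_le_one (le_max_right _ _)
            · have := ht₀mem i; rw [hb]; linarith
    have h2 : dd ≤ (max dd 1 : ℝ) ^ k :=
      le_trans (le_max_left _ _) (le_self_pow₀ (le_max_right _ _) (by omega))
    linarith
  have hivt : dd ∈ f '' Set.Icc t₀ b := by
    apply intermediate_value_Icc ht₀b hfcont.continuousOn
    rw [hf0]
    exact ⟨hdd, hfb⟩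
  obtain ⟨t, ht, hft⟩ := hivt
  refine ⟨t, ⟨(hcond t).mpr ht.1, hft⟩, ?_⟩
  intro y ⟨hy1, hy2⟩
  have hy : t₀ ≤ y := (hcond y).mp hy1
  exact hmono.injOn (Set.mem_Ici.mpr hy) (Set.mem_Ici.mpr ht.1) (by show (∏ i : Fin k, (y + d i)) = f t; rw [hy2, hft])
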